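/- ((c+3)/4)(nr + n + r − 2) + ((c−1)/4)(2r − 1 − (n−2) η(X_1)² + 3‖C X_1‖²) ≤ R̂ic(U_1) + Ric*(X_1) + (1/4)‖N‖² + 3 Σ_{s=2}^n ‖A(X_1, X_s)‖² − δ + tV − aH. Equality holds if and only if T(U_1, U_1) = Σ_{j=2}^r T(U_j, U_j) and T(U_1, U_j) = 0 for all j = 2, …, r. -/

import Mathlib

open scoped RealInnerProductSpace

set_option maxHeartbeats 2000000 in
/-- Combined Chen–Ricci inequality for an anti-invariant Riemannian submersion
from a Sasakian space form with horizontal Reeb vector field. -/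
theorem stmt_14 {E : Type*} [NormedAddCommGroup E] [InnerProductSpace ℝ E]
    [FiniteDimensional ℝ E]
    (c : ℝ) (r n : ℕ) (hr : 0 < r) (hn : 0 < n)
    (VS : Submodule ℝ E)
    (U : OrthonormalBasis (Fin r) ℝ ↥VS)
    (X : OrthonormalBasis (Fin n) ℝ ↥VSᗮ)
    (ξ : E) (hξH : ξ ∈ VSᗮ) (hξ : ‖ξ‖ = 1)
    (η : E → ℝ) (hη : ∀ Y, η Y = ⟪Y, ξ⟫)
    (φ : E →ₗ[ℝ] E) (hφskew : ∀ Y Z, ⟪φ Y, Z⟫ = -⟪Y, φ Z⟫)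
    (hφ2 : ∀ Y, φ (φ Y) = -Y + η Y • ξ)
    (hanti : ∀ v ∈ VS, φ v ∈ VSᗮ)
    (C : ↥VSᗮ → ↥VSᗮ)
    (hC : ∀ x : ↥VSᗮ, (C x : E) = VSᗮ.orthogonalProjectionOnto (φ (x : E)))
    (T : ↥VS →ₗ[ℝ] ↥VS →ₗ[ℝ] ↥VSᗮ) (hT : ∀ u v, T u v = T v u)
    (A : ↥VSᗮ →ₗ[ℝ] ↥VSᗮ →ₗ[ℝ] ↥VS) (hA : ∀ x y, A x y = -A y x)
    (N : ↥VSᗮ) (hN : N = ∑ j, T (U j) (U j))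
    (Rhat : ↥VS → ↥VS → ↥VS → ↥VS → ℝ)
    (hRhat : ∀ x y z w, Rhat x y z w =
      (c + 3) / 4 * (⟪y, z⟫ * ⟪x, w⟫ - ⟪x, z⟫ * ⟪y, w⟫)
        - ⟪T x w, T y z⟫ + ⟪T y w, T x z⟫)
    (Rstar : ↥VSᗮ → ↥VSᗮ → ↥VSᗮ → ↥VSᗮ → ℝ)
    (hRstar : ∀ x y z w, Rstar x y z w =
      (c + 3) / 4 * (⟪y, z⟫ * ⟪x, w⟫ - ⟪x, z⟫ * ⟪y, w⟫)
        + (c - 1) / 4 * (η (x : E) * η (z : E) * ⟪y, w⟫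
            - η (y : E) * η (z : E) * ⟪x, w⟫
            + η (y : E) * η (w : E) * ⟪x, z⟫
            - η (x : E) * η (w : E) * ⟪y, z⟫
            + ⟪C y, z⟫ * ⟪C x, w⟫ - ⟪C y, w⟫ * ⟪C x, z⟫
            - 2 * ⟪w, C z⟫ * ⟪C x, y⟫)
        + 2 * ⟪A x y, A z w⟫ - ⟪A y z, A x w⟫ + ⟪A x z, A y w⟫)
    (Rc : E → E → E → E → ℝ)
    (hRc : ∀ x y z w, Rc x y z w =
      (c + 3) / 4 * (⟪y, z⟫ * ⟪x, w⟫ - ⟪x, z⟫ * ⟪y, w⟫)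
        + (c - 1) / 4 * (η x * η z * ⟪y, w⟫ - η y * η z * ⟪x, w⟫
            + η y * η w * ⟪x, z⟫ - η x * η w * ⟪y, z⟫
            + ⟪φ y, z⟫ * ⟪φ x, w⟫ - ⟪φ x, z⟫ * ⟪φ y, w⟫
            - 2 * ⟪φ x, y⟫ * ⟪φ z, w⟫))
    (δ tV aH : ℝ)
    (hmix : -δ + tV - aH = ∑ i, ∑ k,
      Rc (X i : E) (U k : E) (U k : E) (X i : E)) :
    ((c + 3) / 4 * ((n : ℝ) * (r : ℝ) + (n : ℝ) + (r : ℝ) - 2)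
        + (c - 1) / 4 * (2 * (r : ℝ) - 1
            - ((n : ℝ) - 2) * (η (X ⟨0, hn⟩ : E)) ^ 2
            + 3 * ‖C (X ⟨0, hn⟩)‖ ^ 2) ≤
      (∑ k, Rhat (U k) (U ⟨0, hr⟩) (U ⟨0, hr⟩) (U k))
        + (∑ s, Rstar (X ⟨0, hn⟩) (X s) (X s) (X ⟨0, hn⟩))
        + (1 / 4) * ‖N‖ ^ 2
        + 3 * ∑ s ∈ Finset.univ.filter (fun s => s ≠ ⟨0, hn⟩),
            ‖A (X ⟨0, hn⟩) (X s)‖ ^ 2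
        - δ + tV - aH) ∧
    (((c + 3) / 4 * ((n : ℝ) * (r : ℝ) + (n : ℝ) + (r : ℝ) - 2)
        + (c - 1) / 4 * (2 * (r : ℝ) - 1
            - ((n : ℝ) - 2) * (η (X ⟨0, hn⟩ : E)) ^ 2
            + 3 * ‖C (X ⟨0, hn⟩)‖ ^ 2) =
      (∑ k, Rhat (U k) (U ⟨0, hr⟩) (U ⟨0, hr⟩) (U k))
        + (∑ s, Rstar (X ⟨0, hn⟩) (X s) (X s) (X ⟨0, hn⟩))
        + (1 / 4) * ‖N‖ ^ 2
        + 3 * ∑ s ∈ Finset.univ.filter (fun s => s ≠ ⟨0, hn⟩),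
            ‖A (X ⟨0, hn⟩) (X s)‖ ^ 2
        - δ + tV - aH) ↔
      (T (U ⟨0, hr⟩) (U ⟨0, hr⟩) =
          ∑ j ∈ Finset.univ.filter (fun j => j ≠ ⟨0, hr⟩), T (U j) (U j) ∧
        ∀ j : Fin r, j ≠ ⟨0, hr⟩ → T (U ⟨0, hr⟩) (U j) = 0)) := by
  classical
  have hUinner : ∀ i j : Fin r, ⟪U i, U j⟫ = if i = j then 1 else 0 :=
    orthonormal_iff_ite.mp U.orthonormal
  have hXinner : ∀ i j : Fin n, ⟪X i, X j⟫ = if i = j then 1 else 0 :=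
    orthonormal_iff_ite.mp X.orthonormal
  set k0 : Fin r := ⟨0, hr⟩ with hk0
  set s0 : Fin n := ⟨0, hn⟩ with hs0
  set u0 : ↥VS := U k0 with hu0
  set x0 : ↥VSᗮ := X s0 with hx0
  set t11 : ↥VSᗮ := T u0 u0 with ht11
  set ξ' : ↥VSᗮ := ⟨ξ, hξH⟩ with hξ'
  have hUU : ∀ k : Fin r, ⟪U k, U k⟫ = (1:ℝ) := fun k => by simpa using hUinner k k
  have hXX : ∀ s : Fin n, ⟪X s, X s⟫ = (1:ℝ) := fun s => by simpa using hXinner s s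
  have hUUu : ⟪u0, u0⟫ = (1:ℝ) := by rw [hu0]; exact hUU k0
  have hXXx0 : ⟪x0, x0⟫ = (1:ℝ) := by rw [hx0]; exact hXX s0
  have hηsub : ∀ x : ↥VSᗮ, η (x : E) = ⟪ξ', x⟫ := by
    intro x
    rw [hη, Submodule.coe_inner VSᗮ ξ' x]
    exact real_inner_comm _ _
  have hξξ : ⟪ξ', ξ'⟫ = (1:ℝ) := by
    rw [Submodule.coe_inner]
    show ⟪ξ, ξ⟫ = 1
    rw [real_inner_self_eq_norm_sq, hξ]; norm_num
  have hCinner : ∀ x y : ↥VSᗮ, ⟪C x, y⟫ = ⟪φ (x:E), (y:E)⟫ := by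
    intro x y
    have h := Submodule.starProjection_inner_eq_zero (K := VSᗮ) (φ (x:E)) (y:E) y.2
    rw [inner_sub_left, sub_eq_zero] at h
    rw [Submodule.coe_inner, hC]
    exact h.symm
  have hCskew : ∀ x y : ↥VSᗮ, ⟪C x, y⟫ = -⟪C y, x⟫ := by
    intro x y
    rw [hCinner, hCinner, hφskew, real_inner_comm ((x:E)) (φ (y:E))]
  have hCself : ∀ x : ↥VSᗮ, ⟪C x, x⟫ = 0 := fun x => by
    have h := hCskew x x; linarith
  have hAself : ∀ y : ↥VSᗮ, A y y = 0 := by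
    intro y
    have h : (2:ℝ) • A y y = 0 := by
      rw [two_smul]; nth_rewrite 2 [hA]; exact add_neg_cancel _
    rcases smul_eq_zero.mp h with h2 | h0
    · norm_num at h2
    · exact h0
  have hφself : ∀ Y : E, ⟪φ Y, Y⟫ = 0 := by
    intro Y
    linarith [hφskew Y Y, real_inner_comm Y (φ Y)]
  have BsumX : ∀ v w : ↥VSᗮ, ∑ s, ⟪X s, v⟫ * ⟪X s, w⟫ = ⟪v, w⟫ := by
    intro v w
    rw [← X.sum_inner_mul_inner v w]
    exact Finset.sum_congr rfl fun s _ => by rw [real_inner_comm v (X s)]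
  have BsumU : ∀ v w : ↥VS, ∑ k, ⟪U k, v⟫ * ⟪U k, w⟫ = ⟪v, w⟫ := by
    intro v w
    rw [← U.sum_inner_mul_inner v w]
    exact Finset.sum_congr rfl fun k _ => by rw [real_inner_comm v (U k)]
  -- Claim 1 : vertical Ricci sum
  have claim1 : ∑ k, Rhat (U k) u0 u0 (U k)
      = (c+3)/4 * ((r:ℝ) - 1) - ⟪N, t11⟫ + ∑ k, ‖T u0 (U k)‖^2 := by
    have e : ∀ k, Rhat (U k) u0 u0 (U k)
        = (c+3)/4 * (1 - ⟪U k, u0⟫ * ⟪U k, u0⟫)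
          - ⟪T (U k) (U k), t11⟫ + ‖T u0 (U k)‖^2 := by
      intro k
      rw [hRhat]
      rw [hUUu]
      rw [hUU k]
      rw [real_inner_comm (U k) u0]
      rw [hT (U k) u0]
      rw [real_inner_self_eq_norm_sq]
      rw [ht11]
      ring
    have sp : ∑ k, ⟪U k, u0⟫ * ⟪U k, u0⟫ = 1 := by rw [BsumU, hUUu]
    have sq' : ∑ k, ⟪T (U k) (U k), t11⟫ = ⟪N, t11⟫ := by rw [hN, sum_inner]
    calc ∑ k, Rhat (U k) u0 u0 (U k)
        = ∑ k, ((c+3)/4 * (1 - ⟪U k, u0⟫ * ⟪U k, u0⟫)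
            - ⟪T (U k) (U k), t11⟫ + ‖T u0 (U k)‖^2) :=
          Finset.sum_congr rfl fun k _ => e k
      _ = (c+3)/4 * ((r:ℝ) - 1) - ⟪N, t11⟫ + ∑ k, ‖T u0 (U k)‖^2 := by
          rw [Finset.sum_add_distrib, Finset.sum_sub_distrib, ← Finset.mul_sum,
            Finset.sum_sub_distrib, sp, sq', Finset.sum_const, Finset.card_univ,
            Fintype.card_fin, nsmul_eq_mul, mul_one]
  -- Claim 2 : horizontal Ricci sum
  have claim2 : ∑ s, Rstar x0 (X s) (X s) x0
      = (c+3)/4 * ((n:ℝ) - 1)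
        + (c-1)/4 * (-1 - ((n:ℝ)-2) * (η (x0:E))^2 + 3*‖C x0‖^2)
        - 3 * ∑ s, ‖A x0 (X s)‖^2 := by
    have e2 : ∀ s, Rstar x0 (X s) (X s) x0
        = (c+3)/4 * (1 - ⟪X s, x0⟫ * ⟪X s, x0⟫)
          + (c-1)/4 * (2*(⟪ξ', x0⟫ * (⟪X s, ξ'⟫ * ⟪X s, x0⟫))
              - ⟪X s, ξ'⟫ * ⟪X s, ξ'⟫ - ⟪ξ', x0⟫ * ⟪ξ', x0⟫
              + 3*(⟪X s, C x0⟫ * ⟪X s, C x0⟫))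
          - 3 * ‖A x0 (X s)‖^2 := by
      intro s
      rw [hRstar]
      simp only [hηsub]
      rw [hXX s]
      rw [hXXx0]
      rw [hCself (X s)]
      rw [real_inner_comm (C (X s)) x0]
      rw [hCskew (X s) x0]
      rw [hAself (X s)]
      rw [hA (X s) x0]
      rw [inner_neg_right]
      rw [inner_zero_left]
      rw [real_inner_self_eq_norm_sq]
      rw [real_inner_comm (X s) x0]
      rw [real_inner_comm (X s) ξ']
      rw [real_inner_comm (X s) (C x0)]
      ring
    have h1 : ∑ s, ⟪X s, x0⟫ * ⟪X s, x0⟫ = 1 := by rw [BsumX, hXXx0]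
    have h2 : ∑ s, ⟪X s, ξ'⟫ * ⟪X s, ξ'⟫ = 1 := by rw [BsumX, hξξ]
    have h3 : ∑ s, ⟪X s, ξ'⟫ * ⟪X s, x0⟫ = ⟪ξ', x0⟫ := BsumX ξ' x0
    have h4 : ∑ s, ⟪X s, C x0⟫ * ⟪X s, C x0⟫ = ‖C x0‖^2 := by
      rw [BsumX]; exact real_inner_self_eq_norm_sq _
    have hd : η (x0:E) = ⟪ξ', x0⟫ := hηsub x0
    calc ∑ s, Rstar x0 (X s) (X s) x0
        = ∑ s, ((c+3)/4 * (1 - ⟪X s, x0⟫ * ⟪X s, x0⟫)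
          + (c-1)/4 * (2*(⟪ξ', x0⟫ * (⟪X s, ξ'⟫ * ⟪X s, x0⟫))
              - ⟪X s, ξ'⟫ * ⟪X s, ξ'⟫ - ⟪ξ', x0⟫ * ⟪ξ', x0⟫
              + 3*(⟪X s, C x0⟫ * ⟪X s, C x0⟫))
          - 3 * ‖A x0 (X s)‖^2) := Finset.sum_congr rfl fun s _ => e2 s
      _ = (c+3)/4 * ((n:ℝ) - 1)
          + (c-1)/4 * (-1 - ((n:ℝ)-2) * (η (x0:E))^2 + 3*‖C x0‖^2)
          - 3 * ∑ s, ‖A x0 (X s)‖^2 := by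
          simp only [Finset.sum_add_distrib, Finset.sum_sub_distrib,
            ← Finset.mul_sum, h1, h2, h3, h4, Finset.sum_const,
            Finset.card_univ, Fintype.card_fin, nsmul_eq_mul]
          rw [hd]; ring
  -- Claim 3 : mixed curvature sum
  have hUkξ : ∀ k : Fin r, ⟪(U k : E), ξ⟫ = 0 :=
    fun k => Submodule.inner_right_of_mem_orthogonal (U k).2 hξH
  have hηUk : ∀ k : Fin r, η (U k : E) = 0 := fun k => by rw [hη]; exact hUkξ k
  have hUUE : ∀ k : Fin r, ⟪(U k : E), (U k : E)⟫ = (1:ℝ) := fun k => by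
    rw [← Submodule.coe_inner]; exact hUU k
  have hXXE : ∀ i : Fin n, ⟪(X i : E), (X i : E)⟫ = (1:ℝ) := fun i => by
    rw [← Submodule.coe_inner]; exact hXX i
  have hXiUkE : ∀ (i : Fin n) (k : Fin r), ⟪(X i : E), (U k : E)⟫ = 0 :=
    fun i k => Submodule.inner_left_of_mem_orthogonal (U k).2 (X i).2
  have hUkXiE : ∀ (k : Fin r) (i : Fin n), ⟪(U k : E), (X i : E)⟫ = 0 :=
    fun k i => Submodule.inner_right_of_mem_orthogonal (U k).2 (X i).2
  have claim3 : (∑ i, ∑ k, Rc (X i : E) (U k : E) (U k : E) (X i : E))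
      = (c+3)/4 * ((n:ℝ) * (r:ℝ)) + (c-1)/4 * (2 * (r:ℝ)) := by
    set pU : Fin r → ↥VSᗮ := fun k => ⟨φ (U k : E), hanti _ (U k).2⟩ with hpU
    have hcoepU : ∀ (k : Fin r) (i : Fin n),
        ⟪φ (U k : E), (X i : E)⟫ = ⟪pU k, X i⟫ := by
      intro k i
      simp only [hpU]
      exact (Submodule.coe_inner VSᗮ (⟨φ (U k : E), hanti _ (U k).2⟩ : ↥VSᗮ) (X i)).symm
    have hpUnorm : ∀ k, ⟪pU k, pU k⟫ = (1:ℝ) := by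
      intro k
      simp only [hpU]
      rw [Submodule.coe_inner]
      show ⟪φ (U k : E), φ (U k : E)⟫ = 1
      rw [hφskew, hφ2]
      rw [inner_add_right, inner_neg_right, inner_smul_right, hUkξ k, hUUE k,
        hηUk k]
      ring
    have e3 : ∀ (i : Fin n) (k : Fin r),
        Rc (X i : E) (U k : E) (U k : E) (X i : E)
        = (c+3)/4 + (c-1)/4 * (3*(⟪X i, pU k⟫ * ⟪X i, pU k⟫)
            - ⟪X i, ξ'⟫ * ⟪X i, ξ'⟫) := by
      intro i k
      rw [hRc, hUUE k, hXXE i, hXiUkE i k, hUkXiE k i, hηUk k, hηsub (X i),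
        hφself ((U k : E)), hφself ((X i : E)),
        hφskew ((X i : E)) ((U k : E)), real_inner_comm (φ ((U k : E))) ((X i : E)),
        hcoepU k i, real_inner_comm (X i) (pU k), real_inner_comm (X i) ξ']
      ring
    rw [Finset.sum_comm]
    have inner_i : ∀ k : Fin r, ∑ i, Rc (X i : E) (U k : E) (U k : E) (X i : E)
        = (c+3)/4 * (n:ℝ) + (c-1)/2 := by
      intro k
      calc ∑ i, Rc (X i : E) (U k : E) (U k : E) (X i : E)
          = ∑ i, ((c+3)/4 + (c-1)/4 * (3*(⟪X i, pU k⟫ * ⟪X i, pU k⟫)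
              - ⟪X i, ξ'⟫ * ⟪X i, ξ'⟫)) := Finset.sum_congr rfl fun i _ => e3 i k
        _ = (c+3)/4 * (n:ℝ) + (c-1)/2 := by
            simp only [Finset.sum_add_distrib, Finset.sum_sub_distrib,
              ← Finset.mul_sum, BsumX, hpUnorm k, hξξ, Finset.sum_const,
              Finset.card_univ, Fintype.card_fin, nsmul_eq_mul]
            ring
    rw [Finset.sum_congr rfl fun k _ => inner_i k, Finset.sum_const,
      Finset.card_univ, Fintype.card_fin, nsmul_eq_mul]
    ring
  -- splitting sums at the distinguished index
  have hFsplit : ∑ k, ‖T u0 (U k)‖^2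
      = ‖t11‖^2 + ∑ k ∈ Finset.univ.erase k0, ‖T u0 (U k)‖^2 := by
    rw [← Finset.sum_erase_add Finset.univ _ (Finset.mem_univ k0), ← hu0, ← ht11]
    ring
  have hNsplit : N = t11 + ∑ j ∈ Finset.univ.erase k0, T (U j) (U j) := by
    rw [hN, ← Finset.sum_erase_add Finset.univ _ (Finset.mem_univ k0), ← hu0, ← ht11]
    exact (add_comm _ _)
  have hAs : ∑ s ∈ Finset.univ.filter (fun s => s ≠ s0), ‖A x0 (X s)‖^2
      = ∑ s, ‖A x0 (X s)‖^2 := by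
    rw [Finset.filter_ne']
    exact Finset.sum_erase _ (by rw [← hx0, hAself]; simp)
  have expand : ‖(1/2:ℝ) • N - t11‖^2 = (1/4)*‖N‖^2 - ⟪N, t11⟫ + ‖t11‖^2 := by
    rw [norm_sub_sq_real, norm_smul, real_inner_smul_left, Real.norm_eq_abs]
    have h12 : |(1/2:ℝ)| = 1/2 := by norm_num
    rw [h12]; ring
  -- main identity
  have main : (∑ k, Rhat (U k) u0 u0 (U k))
        + (∑ s, Rstar x0 (X s) (X s) x0)
        + (1 / 4) * ‖N‖ ^ 2
        + 3 * ∑ s ∈ Finset.univ.filter (fun s => s ≠ s0), ‖A x0 (X s)‖ ^ 2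
        - δ + tV - aH
      = ((c + 3) / 4 * ((n : ℝ) * (r : ℝ) + (n : ℝ) + (r : ℝ) - 2)
          + (c - 1) / 4 * (2 * (r : ℝ) - 1
              - ((n : ℝ) - 2) * (η (x0 : E)) ^ 2
              + 3 * ‖C x0‖ ^ 2))
        + (‖(1/2:ℝ) • N - t11‖^2 + ∑ k ∈ Finset.univ.erase k0, ‖T u0 (U k)‖^2) := by
    linear_combination claim1 + claim2 + hmix + claim3 + 3 * hAs + hFsplit - expand
  have hG1n : (0:ℝ) ≤ ‖(1/2:ℝ) • N - t11‖^2 := by positivity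
  have hG2n : (0:ℝ) ≤ ∑ k ∈ Finset.univ.erase k0, ‖T u0 (U k)‖^2 :=
    Finset.sum_nonneg fun k _ => by positivity
  constructor
  · linarith [main]
  · rw [main, left_eq_add]
    constructor
    · intro h
      have hG1 : ‖(1/2:ℝ) • N - t11‖^2 = 0 := by linarith
      have hG2 : ∑ k ∈ Finset.univ.erase k0, ‖T u0 (U k)‖^2 = 0 := by linarith
      constructor
      · have hv : (1/2:ℝ) • N - t11 = 0 := by
          have := (pow_eq_zero_iff two_ne_zero).mp hG1
          · exact norm_eq_zero.mp this
        rw [hNsplit] at hv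
        have hM : (1/2:ℝ) • (t11 + ∑ j ∈ Finset.univ.erase k0, T (U j) (U j)) - t11
            = (1/2:ℝ) • ((∑ j ∈ Finset.univ.erase k0, T (U j) (U j)) - t11) := by
          module
        rw [hM] at hv
        rcases smul_eq_zero.mp hv with h12 | hsub
        · norm_num at h12
        · rw [Finset.filter_ne']
          exact (sub_eq_zero.mp hsub).symm
      · intro j hj
        have hmem : j ∈ Finset.univ.erase k0 :=
          Finset.mem_erase.mpr ⟨hj, Finset.mem_univ j⟩
        have := (Finset.sum_eq_zero_iff_of_nonneg
          (fun k _ => by positivity)).mp hG2 j hmem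
        have hn0 : ‖T u0 (U j)‖ = 0 := by
          have := (pow_eq_zero_iff two_ne_zero).mp this
          exact this
        exact norm_eq_zero.mp hn0
    · rintro ⟨h1, h2⟩
      have hG2 : ∑ k ∈ Finset.univ.erase k0, ‖T u0 (U k)‖^2 = 0 :=
        Finset.sum_eq_zero fun k hk => by
          rw [h2 k (Finset.mem_erase.mp hk).1]; simp
      rw [Finset.filter_ne'] at h1
      have hG1 : ‖(1/2:ℝ) • N - t11‖^2 = 0 := by
        have hv : (1/2:ℝ) • N - t11 = 0 := by
          rw [hNsplit, ← h1]
          module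
        rw [hv]; simp
      rw [hG1, hG2, add_zero]
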